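/- Let n ≥ 1, let Q be an n × n real matrix with nonnegative entries, let δ ∈ (0, 1] and 0 < m ≤ n be real numbers, and suppose that the ℓ²-operator norm satisfies ‖Q‖ ≤ 1 − δm/n and that for every natural number t and all indices s, x one has (Qᵗ)_{s,x} ≤ 1/n + (1−δ)ᵗ. Then for all natural numbers t, r and every index s: Σ_x (Q^{t+r})_{s,x} ≤ (1 − δm/n)^r + n(1−δ)^t. -/

import Mathlib

open scoped BigOperators

/-- Row-sum bound for powers of a substochastic expander-walk matrix:
if all entries of `Q` are nonnegative, the ℓ²-operator norm satisfies
`‖Q‖ ≤ 1 − δm/n`, and `(Qᵗ)_{s,x} ≤ 1/n + (1−δ)ᵗ` entrywise, then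
`Σ_x (Q^{t+r})_{s,x} ≤ (1 − δm/n)^r + n(1−δ)^t`. -/
theorem stmt16 (n : ℕ) (hn : 1 ≤ n) (Q : Matrix (Fin n) (Fin n) ℝ)
    (hQ0 : ∀ i j, 0 ≤ Q i j)
    (δ m : ℝ) (hδ0 : 0 < δ) (hδ1 : δ ≤ 1) (hm0 : 0 < m) (hmn : m ≤ n)
    (hnorm : ∀ x : Fin n → ℝ,
      Real.sqrt (∑ i, (Q.mulVec x) i ^ 2) ≤
        (1 - δ * m / n) * Real.sqrt (∑ i, x i ^ 2))
    (hent : ∀ (t : ℕ) (s x : Fin n), (Q ^ t) s x ≤ 1 / n + (1 - δ) ^ t) :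
    ∀ (t r : ℕ) (s : Fin n),
      ∑ x, (Q ^ (t + r)) s x ≤ (1 - δ * m / n) ^ r + n * (1 - δ) ^ t := by
  intro t r s
  have hn0 : (0:ℝ) < n := by exact_mod_cast hn
  set c : ℝ := 1 - δ * m / n with hc
  have hc0 : 0 ≤ c := by
    have h1 : δ * m ≤ 1 * (n:ℝ) :=
      mul_le_mul hδ1 hmn hm0.le zero_le_one
    have : δ * m / n ≤ 1 := by
      rw [div_le_one hn0]; linarith
    rw [hc]; linarith
  have hc1 : c ≤ 1 := by
    have : 0 ≤ δ * m / n := by positivity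
    simp only [hc]; linarith
  -- nonnegativity of entries of powers
  have hpow0 : ∀ k, ∀ i j : Fin n, 0 ≤ (Q ^ k) i j := by
    intro k
    induction k with
    | zero =>
      intro i j
      rw [pow_zero]
      by_cases h : i = j <;> simp [Matrix.one_apply, h]
    | succ k ih =>
      intro i j
      rw [pow_succ, Matrix.mul_apply]
      exact Finset.sum_nonneg fun y _ => mul_nonneg (ih i y) (hQ0 y j)
  -- iterated norm bound
  have hnormpow : ∀ k (x : Fin n → ℝ),
      Real.sqrt (∑ i, ((Q ^ k).mulVec x) i ^ 2) ≤ c ^ k * Real.sqrt (∑ i, x i ^ 2) := by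
    intro k
    induction k with
    | zero => intro x; simp
    | succ k ih =>
      intro x
      rw [pow_succ, ← Matrix.mulVec_mulVec]
      calc Real.sqrt (∑ i, ((Q ^ k).mulVec (Q.mulVec x)) i ^ 2)
          ≤ c ^ k * Real.sqrt (∑ i, (Q.mulVec x) i ^ 2) := ih _
        _ ≤ c ^ k * (c * Real.sqrt (∑ i, x i ^ 2)) :=
            mul_le_mul_of_nonneg_left (hnorm x) (pow_nonneg hc0 k)
        _ = c ^ (k + 1) * Real.sqrt (∑ i, x i ^ 2) := by ring
  -- u = row sums of Q^r
  set u : Fin n → ℝ := (Q ^ r).mulVec (fun _ => 1) with hu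
  have hu0 : ∀ y, 0 ≤ u y := by
    intro y
    simp only [hu, Matrix.mulVec, dotProduct]
    exact Finset.sum_nonneg fun x _ => by simpa using hpow0 r y x
  have husq : Real.sqrt (∑ i, u i ^ 2) ≤ c ^ r * Real.sqrt n := by
    have := hnormpow r (fun _ => 1)
    simpa using this
  -- Cauchy–Schwarz: ∑ u ≤ √n · √(∑ u²)
  have hsumu : ∑ y, u y ≤ (n:ℝ) * c ^ r := by
    have hcs : (∑ y, (1:ℝ) * u y) ^ 2 ≤ (∑ y : Fin n, (1:ℝ) ^ 2) * ∑ y, u y ^ 2 :=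
      Finset.sum_mul_sq_le_sq_mul_sq Finset.univ _ _
    have hcs' : (∑ y, u y) ^ 2 ≤ (n:ℝ) * ∑ y, u y ^ 2 := by simpa using hcs
    have hs0 : 0 ≤ ∑ y, u y := Finset.sum_nonneg fun y _ => hu0 y
    have h1 : ∑ y, u y ≤ Real.sqrt ((n:ℝ) * ∑ y, u y ^ 2) := by
      rw [show (∑ y, u y) = Real.sqrt ((∑ y, u y) ^ 2) from (Real.sqrt_sq hs0).symm]
      exact Real.sqrt_le_sqrt hcs'
    have h2 : Real.sqrt ((n:ℝ) * ∑ y, u y ^ 2)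
        = Real.sqrt n * Real.sqrt (∑ y, u y ^ 2) := Real.sqrt_mul hn0.le _
    have h3 : Real.sqrt n * Real.sqrt (∑ y, u y ^ 2)
        ≤ Real.sqrt n * (c ^ r * Real.sqrt n) :=
      mul_le_mul_of_nonneg_left husq (Real.sqrt_nonneg _)
    have h4 : Real.sqrt n * (c ^ r * Real.sqrt n) = (n:ℝ) * c ^ r := by
      rw [show Real.sqrt ↑n * (c ^ r * Real.sqrt ↑n) = Real.sqrt ↑n * Real.sqrt ↑n * c ^ r by ring,
        Real.mul_self_sqrt hn0.le]
    linarith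
  -- decompose the main sum
  have hdecomp : ∑ x, (Q ^ (t + r)) s x = ∑ y, (Q ^ t) s y * u y := by
    rw [pow_add]
    simp only [Matrix.mul_apply, hu, Matrix.mulVec, dotProduct, mul_one]
    rw [Finset.sum_comm]
    simp [Finset.mul_sum]
  have hδt : (0:ℝ) ≤ (1 - δ) ^ t := pow_nonneg (by linarith) t
  have hbound : ∑ y, (Q ^ t) s y * u y ≤ (1 / n + (1 - δ) ^ t) * ∑ y, u y := by
    rw [Finset.mul_sum]
    exact Finset.sum_le_sum fun y _ =>
      mul_le_mul_of_nonneg_right (hent t s y) (hu0 y)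
  have hcoef : (0:ℝ) ≤ 1 / n + (1 - δ) ^ t := by positivity
  calc ∑ x, (Q ^ (t + r)) s x
      = ∑ y, (Q ^ t) s y * u y := hdecomp
    _ ≤ (1 / n + (1 - δ) ^ t) * ∑ y, u y := hbound
    _ ≤ (1 / n + (1 - δ) ^ t) * ((n:ℝ) * c ^ r) :=
        mul_le_mul_of_nonneg_left hsumu hcoef
    _ = c ^ r + (n:ℝ) * (1 - δ) ^ t * c ^ r := by
        field_simp
    _ ≤ c ^ r + (n:ℝ) * (1 - δ) ^ t := by
        have hcr1 : c ^ r ≤ 1 := pow_le_one₀ hc0 hc1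
        have : (n:ℝ) * (1 - δ) ^ t * c ^ r ≤ (n:ℝ) * (1 - δ) ^ t * 1 :=
          mul_le_mul_of_nonneg_left hcr1 (by positivity)
        linarith
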